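/- Let λ > 0, s ≥ 1 an integer, c ≥ 1 an integer, and let ℓ : Fin c → ℕ be a function such that for every j ∈ ℕ, the number of indices i with ℓ(i) = j is at most s²·2^j. Then ∑_{i} 2^{λ ℓ(i)} ≥ s²·(2^{(k+1)(λ+1)} − 1)/(2^{λ+1} − 1), where k is the largest integer with s²(2^{k+1} − 1) ≤ c. -/

import Mathlib

open Finset Real

lemma packing_alg (a : ℝ) (k : ℕ) :
    ∑ j ∈ range (k+1), (2*a)^j =
      ((2:ℝ)^(k+1) - 1) + ∑ m ∈ range k, (a^(m+1) - a^m) * ((2:ℝ)^(k+1) - 2^(m+1)) := by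
  induction k with
  | zero => norm_num
  | succ k IH =>
    rw [Finset.sum_range_succ, IH, Finset.sum_range_succ _ k]
    have h1 : ∑ m ∈ range k, (a^(m+1) - a^m) * ((2:ℝ)^(k+1+1) - 2^(m+1))
        = ∑ m ∈ range k, ((a^(m+1) - a^m) * ((2:ℝ)^(k+1) - 2^(m+1))
            + (a^(m+1) - a^m) * 2^(k+1)) := by
      apply Finset.sum_congr rfl; intro m _; ring
    rw [h1, Finset.sum_add_distrib, ← Finset.sum_mul,
      Finset.sum_range_sub (fun m => a^m)]
    ring

theorem packing_lower_bound
    (l : ℝ) (hl : 0 < l) (s c : ℕ) (hs : 1 ≤ s) (hc : 1 ≤ c)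
    (len : Fin c → ℕ)
    (hcount : ∀ j : ℕ, ((Finset.univ.filter (fun i => len i = j)).card) ≤ s ^ 2 * 2 ^ j)
    (k : ℕ)
    (hk : s ^ 2 * (2 ^ (k + 1) - 1) ≤ c)
    (hkmax : ∀ k' : ℕ, s ^ 2 * (2 ^ (k' + 1) - 1) ≤ c → k' ≤ k) :
    ∑ i, (2 : ℝ) ^ (l * (len i : ℝ)) ≥
      (s : ℝ) ^ 2 * ((2 : ℝ) ^ (((k : ℝ) + 1) * (l + 1)) - 1) / ((2 : ℝ) ^ (l + 1) - 1) := by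
  set a : ℝ := (2:ℝ) ^ l with ha
  have ha1 : 1 < a := Real.one_lt_rpow_iff_of_pos (by norm_num) |>.2 (Or.inl ⟨by norm_num, hl⟩)
  have hpow : ∀ n : ℕ, (2:ℝ) ^ (l * (n:ℝ)) = a ^ n := by
    intro n
    rw [← Real.rpow_natCast a n, ha, ← Real.rpow_mul (by norm_num : (0:ℝ) ≤ 2)]
  -- pointwise bound
  have hpt : ∀ n : ℕ, a ^ n ≥ 1 + ∑ m ∈ range k, (if m < n then a^(m+1) - a^m else 0) := by
    intro n
    have : ∑ m ∈ range k, (if m < n then a^(m+1) - a^m else 0)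
        = ∑ m ∈ range (min n k), (a^(m+1) - a^m) := by
      rw [← Finset.sum_filter]
      congr 1
      ext m; simp [lt_min_iff, and_comm]
    rw [this, Finset.sum_range_sub (fun m => a^m)]
    simp only [pow_zero]
    have : a ^ (min n k) ≤ a ^ n := pow_le_pow_right₀ ha1.le (min_le_left n k)
    linarith
  -- counting bound
  have hcard : ∀ m : ℕ,
      ((Finset.univ.filter (fun i : Fin c => m < len i)).card : ℝ)
        ≥ (c : ℝ) - (s:ℝ)^2 * ((2:ℝ)^(m+1) - 1) := by
    intro m
    have hsplit : (Finset.univ.filter (fun i : Fin c => len i ≤ m)).card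
        + (Finset.univ.filter (fun i : Fin c => m < len i)).card = c := by
      have h0 := Finset.card_filter_add_card_filter_not
        (s := (Finset.univ : Finset (Fin c))) (p := fun i => len i ≤ m)
      simp only [not_le, Finset.card_univ, Fintype.card_fin] at h0
      exact h0
    have hle : (Finset.univ.filter (fun i : Fin c => len i ≤ m)).card
        ≤ ∑ j ∈ range (m+1), s^2 * 2^j := by
      have := Finset.card_eq_sum_card_fiberwise
        (f := fun i : Fin c => len i) (s := Finset.univ.filter (fun i : Fin c => len i ≤ m))
        (t := range (m+1)) (by intro x hx; simp at hx ⊢; omega)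
      rw [this]
      apply Finset.sum_le_sum
      intro j hj
      calc ((Finset.univ.filter (fun i : Fin c => len i ≤ m)).filter (fun i => len i = j)).card
          ≤ (Finset.univ.filter (fun i : Fin c => len i = j)).card := by
            apply Finset.card_le_card
            intro x hx; simp at hx ⊢; exact hx.2
        _ ≤ s^2 * 2^j := hcount j
    have hgeo : ((∑ j ∈ range (m+1), s^2 * 2^j : ℕ) : ℝ) = (s:ℝ)^2 * ((2:ℝ)^(m+1) - 1) := by
      push_cast
      rw [← Finset.mul_sum, geom_sum_eq (by norm_num : (2:ℝ) ≠ 1)]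
      ring
    have h1 : ((Finset.univ.filter (fun i : Fin c => len i ≤ m)).card : ℝ)
        ≤ (s:ℝ)^2 * ((2:ℝ)^(m+1) - 1) := by
      rw [← hgeo]; exact_mod_cast hle
    have h2 : ((Finset.univ.filter (fun i : Fin c => len i ≤ m)).card : ℝ)
        + ((Finset.univ.filter (fun i : Fin c => m < len i)).card : ℝ) = c := by
      exact_mod_cast hsplit
    linarith
  -- step A: sum lower bound
  have hd : ∀ m : ℕ, 0 ≤ a^(m+1) - a^m := by
    intro m
    have h : a ^ m ≤ a ^ (m+1) := pow_le_pow_right₀ ha1.le (Nat.le_succ m)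
    linarith
  have hB : (s:ℝ)^2 * ((2:ℝ)^(k+1) - 1) ≤ (c:ℝ) := by
    have h1 : (1:ℕ) ≤ 2^(k+1) := Nat.one_le_two_pow
    calc (s:ℝ)^2 * ((2:ℝ)^(k+1) - 1) = ((s^2 * (2^(k+1) - 1) : ℕ) : ℝ) := by
          push_cast [h1]; ring
      _ ≤ c := by exact_mod_cast hk
  have stepA : ∑ i, (2:ℝ) ^ (l * (len i : ℝ))
      ≥ (c:ℝ) + ∑ m ∈ range k, (a^(m+1) - a^m)
          * ((Finset.univ.filter (fun i : Fin c => m < len i)).card : ℝ) := by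
    have : ∑ i, (2:ℝ) ^ (l * (len i : ℝ)) = ∑ i, a ^ (len i) := by
      apply Finset.sum_congr rfl; intro i _; exact hpow (len i)
    rw [this]
    have h2 : ∑ i : Fin c, (1 + ∑ m ∈ range k, (if m < len i then a^(m+1) - a^m else 0))
        = (c:ℝ) + ∑ m ∈ range k, (a^(m+1) - a^m)
            * ((Finset.univ.filter (fun i : Fin c => m < len i)).card : ℝ) := by
      rw [Finset.sum_add_distrib]
      congr 1
      · simp
      rw [Finset.sum_comm]
      apply Finset.sum_congr rfl
      intro m _
      rw [← Finset.sum_filter]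
      simp [Finset.sum_const, mul_comm, sub_mul]
    rw [← h2]
    exact Finset.sum_le_sum (fun i _ => hpt (len i))
  -- combine
  have stepB : ∑ i, (2:ℝ) ^ (l * (len i : ℝ))
      ≥ (s:ℝ)^2 * (((2:ℝ)^(k+1) - 1)
          + ∑ m ∈ range k, (a^(m+1) - a^m) * ((2:ℝ)^(k+1) - 2^(m+1))) := by
    have h1 : ∀ m ∈ range k, (a^(m+1) - a^m) * ((s:ℝ)^2 * (((2:ℝ)^(k+1) - 1) - ((2:ℝ)^(m+1) -1)))
        ≤ (a^(m+1) - a^m) * ((Finset.univ.filter (fun i : Fin c => m < len i)).card : ℝ) := by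
      intro m _
      apply mul_le_mul_of_nonneg_left _ (hd m)
      have := hcard m
      nlinarith [hB]
    have h2 : ∑ m ∈ range k, (a^(m+1) - a^m) * ((s:ℝ)^2 * (((2:ℝ)^(k+1) - 1) - ((2:ℝ)^(m+1) -1)))
        ≤ ∑ m ∈ range k, (a^(m+1) - a^m)
            * ((Finset.univ.filter (fun i : Fin c => m < len i)).card : ℝ) :=
      Finset.sum_le_sum h1
    have expand : (s:ℝ)^2 * (((2:ℝ)^(k+1) - 1)
          + ∑ m ∈ range k, (a^(m+1) - a^m) * ((2:ℝ)^(k+1) - 2^(m+1)))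
        = (s:ℝ)^2 * ((2:ℝ)^(k+1) - 1)
          + ∑ m ∈ range k, (a^(m+1) - a^m) * ((s:ℝ)^2 * (((2:ℝ)^(k+1) - 1) - ((2:ℝ)^(m+1) -1))) := by
      rw [mul_add, Finset.mul_sum]
      congr 1
      apply Finset.sum_congr rfl; intro m _; ring
    rw [expand]
    linarith [stepA, h2, hB]
  -- final algebra
  rw [← packing_alg a k] at stepB
  have h2a : (2:ℝ) ^ (l+1) = 2 * a := by
    rw [Real.rpow_add (by norm_num), Real.rpow_one, ha]; ring
  have hgk : (2:ℝ) ^ (((k:ℝ)+1) * (l+1)) = (2*a)^(k+1) := by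
    rw [← h2a, show ((k:ℝ)+1) = ((k+1 : ℕ) : ℝ) by push_cast; ring, mul_comm,
      Real.rpow_mul (by norm_num), Real.rpow_natCast]
  rw [hgk, h2a]
  have h2a1 : (2*a) ≠ 1 := by nlinarith
  rw [ge_iff_le, div_le_iff₀ (by nlinarith)]
  have := geom_sum_eq h2a1 (k+1)
  have hsum : ((2*a)^(k+1) - 1) = (∑ j ∈ range (k+1), (2*a)^j) * (2*a - 1) := by
    have hne : (2*a - 1) ≠ 0 := by nlinarith
    rw [this, div_mul_cancel₀ _ hne]
  calc (s:ℝ)^2 * ((2*a)^(k+1) - 1) = (s:ℝ)^2 * (∑ j ∈ range (k+1), (2*a)^j) * (2*a-1) := by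
        rw [hsum]; ring
    _ ≤ (∑ i, (2:ℝ) ^ (l * (len i : ℝ))) * (2*a - 1) := by
        apply mul_le_mul_of_nonneg_right _ (by nlinarith)
        exact stepB
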